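/- The Dobrushin coefficient achieves the supremum of contraction ratios: η_TV(W) = sup over pairs of distinct distributions P_0, P_1 on X of ‖W(P_0) − W(P_1)‖_TV / ‖P_0 − P_1‖_TV, where the supremum is attained at a pair of point masses. -/

import Mathlib

open Finset

lemma dobrushin_contract {X Y : Type*} [Fintype X] [Fintype Y]
    (W : X → Y → ℝ) (η : ℝ)
    (hη : ∀ x1 x2, (1/2) * ∑ y, |W x1 y - W x2 y| ≤ η)
    (P0 P1 : X → ℝ) (h01 : ∑ x, P0 x = 1) (h11 : ∑ x, P1 x = 1) :
    (1/2) * ∑ y, |(∑ x, P0 x * W x y) - (∑ x, P1 x * W x y)| ≤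
      η * ((1/2) * ∑ x, |P0 x - P1 x|) := by
  set d : X → ℝ := fun x => P0 x - P1 x with hd
  set dp : X → ℝ := fun x => max (d x) 0 with hdp
  set dm : X → ℝ := fun x => max (-d x) 0 with hdm
  have hdpm : ∀ x, dp x - dm x = d x := by
    intro x; simp only [hdp, hdm]
    rcases le_total (d x) 0 with h | h
    · rw [max_eq_right h, max_eq_left (by linarith)]; ring
    · rw [max_eq_left h, max_eq_right (by linarith)]; ring
  have habs : ∀ x, dp x + dm x = |d x| := fun x => max_zero_add_max_neg_zero_eq_abs_self (d x)
  have hdp0 : ∀ x, 0 ≤ dp x := fun x => le_max_right _ _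
  have hdm0 : ∀ x, 0 ≤ dm x := fun x => le_max_right _ _
  set s : ℝ := ∑ x, dp x with hs
  have hsum_d : ∑ x, d x = 0 := by
    simp only [hd]; rw [Finset.sum_sub_distrib, h01, h11]; ring
  have hsm : ∑ x, dm x = s := by
    have : ∑ x, (dp x - dm x) = 0 := by rw [Finset.sum_congr rfl fun x _ => hdpm x]; exact hsum_d
    rw [Finset.sum_sub_distrib] at this; linarith
  have hs0 : 0 ≤ s := Finset.sum_nonneg fun x _ => hdp0 x
  have htv : ∑ x, |P0 x - P1 x| = 2 * s := by
    have : ∑ x, |d x| = ∑ x, (dp x + dm x) := Finset.sum_congr rfl fun x _ => (habs x).symm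
    rw [show (∑ x, |P0 x - P1 x|) = ∑ x, |d x| from rfl, this, Finset.sum_add_distrib, hsm]; ring
  have hnum : ∀ y, (∑ x, P0 x * W x y) - (∑ x, P1 x * W x y) = ∑ x, d x * W x y := by
    intro y; rw [← Finset.sum_sub_distrib]
    exact Finset.sum_congr rfl fun x _ => by simp only [hd]; ring
  rcases eq_or_lt_of_le hs0 with hseq | hspos
  · -- s = 0 : d = 0
    have hzero : ∀ x, d x = 0 := by
      intro x
      have hp : dp x = 0 := by
        have := Finset.sum_eq_zero_iff_of_nonneg (fun x _ => hdp0 x) |>.mp hseq.symm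
        exact this x (mem_univ x)
      have hm : dm x = 0 := by
        have := Finset.sum_eq_zero_iff_of_nonneg (fun x _ => hdm0 x) |>.mp (by rw [hsm]; exact hseq.symm)
        exact this x (mem_univ x)
      rw [← hdpm x, hp, hm]; ring
    have : ∀ y, (∑ x, P0 x * W x y) - (∑ x, P1 x * W x y) = 0 := by
      intro y; rw [hnum y]; exact Finset.sum_eq_zero fun x _ => by rw [hzero x, zero_mul]
    simp only [this, abs_zero, Finset.sum_const_zero, mul_zero]
    rw [htv, ← hseq]; simp
  · -- main case
    have key : ∀ y, s * (∑ x, d x * W x y)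
        = ∑ x, ∑ x', dp x * dm x' * (W x y - W x' y) := by
      intro y
      have A : ∑ x, ∑ x', dp x * dm x' * W x y = (∑ x, dp x * W x y) * (∑ x', dm x') := by
        rw [Finset.sum_mul_sum]
        exact Finset.sum_congr rfl fun x _ => Finset.sum_congr rfl fun x' _ => by ring
      have B : ∑ x, ∑ x', dp x * dm x' * W x' y = (∑ x, dp x) * (∑ x', dm x' * W x' y) := by
        rw [Finset.sum_mul_sum]
        exact Finset.sum_congr rfl fun x _ => Finset.sum_congr rfl fun x' _ => by ring
      have split : ∀ x, ∑ x', dp x * dm x' * (W x y - W x' y)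
          = (∑ x', dp x * dm x' * W x y) - (∑ x', dp x * dm x' * W x' y) := by
        intro x; rw [← Finset.sum_sub_distrib]
        exact Finset.sum_congr rfl fun x' _ => by ring
      rw [Finset.sum_congr rfl fun x _ => split x, Finset.sum_sub_distrib, A, B, hsm, ← hs]
      have : ∑ x, d x * W x y = (∑ x, dp x * W x y) - (∑ x, dm x * W x y) := by
        rw [← Finset.sum_sub_distrib]
        exact Finset.sum_congr rfl fun x _ => by rw [← hdpm x]; ring
      rw [this]; ring
    have bound : ∀ y, |∑ x, d x * W x y| ≤ (1/s) * ∑ x, ∑ x', dp x * dm x' * |W x y - W x' y| := by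
      intro y
      rw [show |∑ x, d x * W x y| = (1/s) * |s * (∑ x, d x * W x y)| by
        rw [abs_mul, abs_of_pos hspos]; field_simp]
      rw [key y]
      gcongr
      calc |∑ x, ∑ x', dp x * dm x' * (W x y - W x' y)|
          ≤ ∑ x, |∑ x', dp x * dm x' * (W x y - W x' y)| := Finset.abs_sum_le_sum_abs _ _
        _ ≤ ∑ x, ∑ x', |dp x * dm x' * (W x y - W x' y)| :=
            Finset.sum_le_sum fun x _ => Finset.abs_sum_le_sum_abs _ _
        _ = ∑ x, ∑ x', dp x * dm x' * |W x y - W x' y| := by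
            refine Finset.sum_congr rfl fun x _ => Finset.sum_congr rfl fun x' _ => ?_
            rw [abs_mul, abs_mul, abs_of_nonneg (hdp0 x), abs_of_nonneg (hdm0 x')]
    calc (1/2) * ∑ y, |(∑ x, P0 x * W x y) - (∑ x, P1 x * W x y)|
        = (1/2) * ∑ y, |∑ x, d x * W x y| := by
          rw [Finset.sum_congr rfl fun y _ => by rw [hnum y]]
      _ ≤ (1/2) * ∑ y, (1/s) * ∑ x, ∑ x', dp x * dm x' * |W x y - W x' y| := by
          gcongr with y _; exact bound y
      _ = (1/s) * ∑ x, ∑ x', dp x * dm x' * ((1/2) * ∑ y, |W x y - W x' y|) := by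
          have swap : ∑ y, ∑ x, ∑ x', dp x * dm x' * |W x y - W x' y|
              = ∑ x, ∑ x', dp x * dm x' * ∑ y, |W x y - W x' y| := by
            rw [Finset.sum_comm]
            refine Finset.sum_congr rfl fun x _ => ?_
            rw [Finset.sum_comm]
            exact Finset.sum_congr rfl fun x' _ => (Finset.mul_sum _ _ _).symm
          rw [← Finset.mul_sum, swap]
          have hr : ∑ x, ∑ x', dp x * dm x' * ((1/2) * ∑ y, |W x y - W x' y|)
              = (1/2) * ∑ x, ∑ x', dp x * dm x' * ∑ y, |W x y - W x' y| := by
            rw [Finset.mul_sum]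
            refine Finset.sum_congr rfl fun x _ => ?_
            rw [Finset.mul_sum]
            exact Finset.sum_congr rfl fun x' _ => by ring
          rw [hr]; ring
      _ ≤ (1/s) * ∑ x, ∑ x', dp x * dm x' * η := by
          refine mul_le_mul_of_nonneg_left ?_ (by positivity : (0:ℝ) ≤ 1/s)
          refine Finset.sum_le_sum fun x _ => Finset.sum_le_sum fun x' _ => ?_
          exact mul_le_mul_of_nonneg_left (hη x x') (by positivity)
      _ = η * ((1/2) * ∑ x, |P0 x - P1 x|) := by
          rw [htv]
          have h2 : ∑ x, ∑ x', dp x * dm x' * η = s * s * η := by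
            have h1 : ∀ x : X, ∑ x', dp x * dm x' * η = dp x * (s * η) := by
              intro x
              calc ∑ x', dp x * dm x' * η = ∑ x', (dp x * η) * dm x' :=
                    Finset.sum_congr rfl fun _ _ => by ring
                _ = (dp x * η) * ∑ x', dm x' := (Finset.mul_sum _ _ _).symm
                _ = dp x * (s * η) := by rw [hsm]; ring
            rw [Finset.sum_congr rfl fun x _ => h1 x, ← Finset.sum_mul, ← hs]; ring
          rw [h2]; field_simp

lemma pt_num {X Y : Type*} [Fintype X] [DecidableEq X] (W : X → Y → ℝ) (a : X) (y : Y) :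
    ∑ x, (if x = a then (1:ℝ) else 0) * W x y = W a y := by
  rw [Finset.sum_congr rfl (fun x _ => (ite_mul (x = a) 1 0 (W x y)).trans (by rw [one_mul, zero_mul]))]
  simp [Finset.sum_ite_eq']

lemma pt_den {X : Type*} [Fintype X] [DecidableEq X] {a b : X} (hab : a ≠ b) :
    ∑ x, |(if x = a then (1:ℝ) else 0) - (if x = b then 1 else 0)| = 2 := by
  rw [← Finset.sum_subset (Finset.subset_univ {a, b})
    (by intro x _ hx; simp only [Finset.mem_insert, Finset.mem_singleton, not_or] at hx
        simp [hx.1, hx.2])]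
  rw [Finset.sum_pair hab]
  simp [hab, hab.symm, abs_of_nonneg]
  norm_num


/-- the Dobrushin coefficient equals the supremum of contraction
ratios over pairs of distinct distributions, and this supremum is attained at a
pair of point masses. -/
theorem stmt15 {X Y : Type*} [Fintype X] [Fintype Y] [DecidableEq X] [Nonempty X] [Nonempty Y]
    (hX : 2 ≤ Fintype.card X)
    (W : X → Y → ℝ)
    (hW0 : ∀ x y, 0 ≤ W x y) (hW1 : ∀ x, ∑ y, W x y = 1) :
    (⨆ x1 : X, ⨆ x2 : X, (1/2) * ∑ y, |W x1 y - W x2 y|) =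
        sSup {r : ℝ | ∃ P0 P1 : X → ℝ,
          (∀ x, 0 ≤ P0 x) ∧ ∑ x, P0 x = 1 ∧
          (∀ x, 0 ≤ P1 x) ∧ ∑ x, P1 x = 1 ∧
          0 < (1/2) * ∑ x, |P0 x - P1 x| ∧
          r = ((1/2) * ∑ y, |(∑ x, P0 x * W x y) - (∑ x, P1 x * W x y)|) /
                ((1/2) * ∑ x, |P0 x - P1 x|)} ∧
      ∃ x1 x2 : X, x1 ≠ x2 ∧
        (⨆ a : X, ⨆ b : X, (1/2) * ∑ y, |W a y - W b y|) =
          ((1/2) * ∑ y, |(∑ x, (if x = x1 then (1:ℝ) else 0) * W x y) -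
              (∑ x, (if x = x2 then (1:ℝ) else 0) * W x y)|) /
            ((1/2) * ∑ x, |(if x = x1 then (1:ℝ) else 0) -
              (if x = x2 then (1:ℝ) else 0)|) := by
  set f : X → X → ℝ := fun a b => (1/2) * ∑ y, |W a y - W b y| with hf
  set η : ℝ := ⨆ a : X, ⨆ b : X, f a b with hη
  have hf0 : ∀ a b, 0 ≤ f a b := fun a b => by
    apply mul_nonneg (by norm_num)
    exact Finset.sum_nonneg fun y _ => abs_nonneg _
  obtain ⟨p, hp⟩ := Finite.exists_max (fun q : X × X => f q.1 q.2)
  have hmax : ∀ a b, f a b ≤ f p.1 p.2 := fun a b => hp (a, b)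
  have hηeq : η = f p.1 p.2 := by
    refine le_antisymm (ciSup_le fun a => ciSup_le fun b => hmax a b) ?_
    refine le_trans (le_ciSup (Finite.bddAbove_range _) p.2) ?_
    exact le_ciSup (Finite.bddAbove_range (fun a : X => ⨆ b : X, f a b)) p.1
  have hub : ∀ a b, f a b ≤ η := by rw [hηeq]; exact hmax
  have hη0 : 0 ≤ η := le_trans (hf0 p.1 p.2) (hηeq.ge)
  -- attainment at a distinct pair
  have hpair : ∃ a b : X, a ≠ b ∧ η = f a b := by
    by_cases hpp : p.1 = p.2
    · have hη0' : η = 0 := by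
        rw [hηeq, hpp, hf]; simp
      obtain ⟨a⟩ := (inferInstance : Nonempty X)
      obtain ⟨b, hb⟩ := Fintype.exists_ne_of_one_lt_card (by omega) a
      exact ⟨b, a, hb, by rw [hη0']; exact le_antisymm (hf0 b a) (hη0' ▸ hub b a)⟩
    · exact ⟨p.1, p.2, hpp, hηeq⟩
  obtain ⟨a, b, hab, hfab⟩ := hpair
  -- ratio at point masses equals f a b
  have hratio : ∀ {c d : X}, c ≠ d →
      ((1/2) * ∑ y, |(∑ x, (if x = c then (1:ℝ) else 0) * W x y) -
          (∑ x, (if x = d then (1:ℝ) else 0) * W x y)|) /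
        ((1/2) * ∑ x, |(if x = c then (1:ℝ) else 0) - (if x = d then (1:ℝ) else 0)|)
      = f c d := by
    intro c d hcd
    rw [pt_den hcd]
    have hy : ∀ y, (∑ x, (if x = c then (1:ℝ) else 0) * W x y) -
        (∑ x, (if x = d then (1:ℝ) else 0) * W x y) = W c y - W d y := fun y => by
      rw [pt_num, pt_num]
    simp only [hy, hf]
    norm_num
  constructor
  · -- sSup equality
    set S := {r : ℝ | ∃ P0 P1 : X → ℝ,
          (∀ x, 0 ≤ P0 x) ∧ ∑ x, P0 x = 1 ∧
          (∀ x, 0 ≤ P1 x) ∧ ∑ x, P1 x = 1 ∧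
          0 < (1/2) * ∑ x, |P0 x - P1 x| ∧
          r = ((1/2) * ∑ y, |(∑ x, P0 x * W x y) - (∑ x, P1 x * W x y)|) /
                ((1/2) * ∑ x, |P0 x - P1 x|)} with hS
    have hmem : η ∈ S := by
      refine ⟨(fun x => if x = a then 1 else 0), (fun x => if x = b then 1 else 0),
        fun x => by positivity, by simp [Finset.sum_ite_eq'],
        fun x => by positivity, by simp [Finset.sum_ite_eq'], ?_, ?_⟩
      · rw [pt_den hab]; norm_num
      · rw [hratio hab]; exact hfab
    have hubS : ∀ r ∈ S, r ≤ η := by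
      rintro r ⟨P0, P1, h00, h01, h10, h11, htv, rfl⟩
      rw [div_le_iff₀ htv]
      exact dobrushin_contract W η hub P0 P1 h01 h11
    exact le_antisymm (le_csSup ⟨η, hubS⟩ hmem) (csSup_le ⟨η, hmem⟩ hubS)
  · exact ⟨a, b, hab, by rw [hratio hab]; exact hfab⟩
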